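/- Let p be a prime, let (a_{ij}) be an n×n matrix of nonnegative integers with nonzero determinant, and let m : (ℚ_p^×)^n → (ℚ_p^×)^n be the group homomorphism of the multiplicative group (ℚ_p^×)^n given by m(x)_i = ∏_{j=1}^n x_j^{a_{ij}}. Then the image m((ℚ_p^×)^n) is a subgroup of finite index in (ℚ_p^×)^n. Moreover, there exist positive integers a and b such that for all integers k_1,…,k_n and all x_1,…,x_n ∈ ℚ_p with |x_i − 1|_p < p^{−a} for all i, the point (p^{b k_1}x_1,…,p^{b k_n}x_n) lies in m((ℚ_p^×)^n). -/

import Mathlib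

/-- The monomial map on the multiplicative group `(ℚ_p^×)^n` associated to a matrix of
nonnegative integer exponents. -/
noncomputable def monomialMapPadic {p : ℕ} [Fact p.Prime] {n : ℕ} (A : Matrix (Fin n) (Fin n) ℕ)
    (x : Fin n → ℚ_[p]ˣ) : Fin n → ℚ_[p]ˣ :=
  fun i => ∏ j, x j ^ A i j

/-- The prime `p`, as a unit of `ℚ_p`. -/
noncomputable def pUnit (p : ℕ) [hp : Fact p.Prime] : ℚ_[p]ˣ :=
  Units.mk0 (p : ℚ_[p]) (by exact_mod_cast hp.out.ne_zero)


open Finset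

variable {p : ℕ} [hp : Fact p.Prime]

lemma prod_zpow_eq_zpow_sum {G ι : Type*} [CommGroup G] (s : Finset ι) (f : ι → ℤ) (a : G) :
    ∏ i ∈ s, a ^ f i = a ^ ∑ i ∈ s, f i := by
  induction s using Finset.cons_induction with
  | empty => simp
  | cons i s hi ih => simp [Finset.prod_cons, Finset.sum_cons, ih, zpow_add]

/-- Hensel step: close-to-1 units are b-th powers. -/
lemma prod_zpow' {G ι : Type*} [CommGroup G] (s : Finset ι) (f : ι → G) (m : ℤ) :
    (∏ i ∈ s, f i) ^ m = ∏ i ∈ s, f i ^ m := by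
  induction s using Finset.cons_induction with
  | empty => simp
  | cons i s hi ih => simp [Finset.prod_cons, ih, mul_zpow]

lemma padic_hensel_pow (b : ℕ) (hb : 0 < b) :
    ∃ a : ℕ, 0 < a ∧ ∀ u : ℚ_[p]ˣ, ‖((u : ℚ_[p]) - 1)‖ < (p : ℝ) ^ (-(a : ℤ)) →
      ∃ z : ℚ_[p]ˣ, z ^ b = u := by
  have hbz : (b : ℤ_[p]) ≠ 0 := Nat.cast_ne_zero.2 hb.ne'
  have hbn : (0:ℝ) < ‖(b : ℤ_[p])‖ ^ 2 := by
    have := norm_pos_iff.2 hbz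
    positivity
  have hp1 : (1:ℝ) < p := Nat.one_lt_cast.2 hp.out.one_lt
  obtain ⟨a0, ha0⟩ := exists_pow_lt_of_lt_one hbn (by
    rw [inv_lt_one_iff₀]; right; exact hp1 : (p:ℝ)⁻¹ < 1)
  refine ⟨a0 + 1, Nat.succ_pos _, fun u hu => ?_⟩
  have hlt : ((p:ℝ))^(-((a0+1:ℕ):ℤ)) < ‖(b : ℤ_[p])‖ ^ 2 := by
    calc ((p:ℝ))^(-((a0+1:ℕ):ℤ)) = ((p:ℝ)⁻¹)^(a0+1) := by
          rw [zpow_neg, ← zpow_natCast, inv_zpow]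
      _ ≤ ((p:ℝ)⁻¹)^a0 := pow_le_pow_of_le_one (by positivity)
          (inv_le_one_of_one_le₀ (le_of_lt hp1)) (Nat.le_succ _)
      _ < _ := ha0
  have hone : ((p : ℝ)) ^ (-((a0+1:ℕ):ℤ)) < 1 := by
    have h1 : ((p : ℝ)) ^ (-((a0+1:ℕ):ℤ)) < (p:ℝ) ^ (0:ℤ) :=
      zpow_lt_zpow_right₀ hp1 (by omega)
    simpa using h1
  have hu2 : ‖((u : ℚ_[p]) - 1)‖ < 1 := lt_trans hu hone
  have hnu : ‖(u : ℚ_[p])‖ = 1 := by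
    have hne : ‖((u : ℚ_[p]) - 1)‖ ≠ ‖(1 : ℚ_[p])‖ := by
      rw [norm_one]; exact ne_of_lt hu2
    have h := Padic.add_eq_max_of_ne hne
    rw [sub_add_cancel] at h
    rw [h, norm_one, max_eq_right (le_of_lt hu2)]
  set U : ℤ_[p] := ⟨(u : ℚ_[p]), le_of_eq hnu⟩ with hUdef
  set F : Polynomial ℤ_[p] := Polynomial.X ^ b - Polynomial.C U with hF
  have h1 : F.eval 1 = 1 - U := by simp [hF]
  have h2 : F.derivative.eval 1 = b := by
    simp [hF, Polynomial.derivative_pow]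
  have hnormU : ‖(1 - U : ℤ_[p])‖ = ‖((u : ℚ_[p]) - 1)‖ := by
    rw [← norm_neg, neg_sub]
    rfl
  have key : ‖F.eval 1‖ < ‖F.derivative.eval 1‖ ^ 2 := by
    rw [h1, h2, hnormU]
    exact lt_trans hu hlt
  obtain ⟨z, hz, -, -, -⟩ := hensels_lemma key
  have hzb : z ^ b = U := by
    have h : z ^ b - U = 0 := by simpa [hF] using hz
    exact sub_eq_zero.1 h
  have hz1 : ‖z‖ = 1 := by
    have hq : ‖(z : ℚ_[p])‖ ^ b = 1 := by
      rw [← norm_pow, ← PadicInt.coe_pow, hzb]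
      exact hnu
    have h0 : (0:ℝ) ≤ ‖(z : ℚ_[p])‖ := norm_nonneg _
    show ‖(z : ℚ_[p])‖ = 1
    rcases lt_trichotomy ‖(z : ℚ_[p])‖ 1 with h | h | h
    · have := pow_lt_one₀ h0 h hb.ne'
      linarith
    · exact h
    · have := one_lt_pow₀ h hb.ne'
      linarith
  have hzu : IsUnit z := PadicInt.isUnit_iff.2 hz1
  refine ⟨Units.map (PadicInt.Coe.ringHom.toMonoidHom) hzu.unit, ?_⟩
  ext
  push_cast [Units.val_pow_eq_pow_val]
  show ((z : ℚ_[p])) ^ b = (u : ℚ_[p])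
  rw [← PadicInt.coe_pow, hzb]

noncomputable def monomialHom {n : ℕ} (A : Matrix (Fin n) (Fin n) ℕ) :
    (Fin n → ℚ_[p]ˣ) →* (Fin n → ℚ_[p]ˣ) where
  toFun := monomialMapPadic A
  map_one' := by funext i; simp [monomialMapPadic]
  map_mul' x y := by
    funext i; simp [monomialMapPadic, mul_pow, Finset.prod_mul_distrib]

lemma zpow_natAbs_det_mem_range {n : ℕ} (A : Matrix (Fin n) (Fin n) ℕ)
    (x : Fin n → ℚ_[p]ˣ) :
    (fun i => x i ^ ((Matrix.of fun i j => (A i j : ℤ)).det.natAbs)) ∈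
      Set.range (monomialMapPadic A) := by
  set D : Matrix (Fin n) (Fin n) ℤ := Matrix.of fun i j => (A i j : ℤ) with hD
  set d : ℤ := D.det with hd
  set e : ℤ := if 0 ≤ d then 1 else -1 with he
  set B : Matrix (Fin n) (Fin n) ℤ := e • D.adjugate with hB
  have hDB : ∀ i k, ∑ j, D i j * B j k = (d.natAbs : ℤ) * (if i = k then 1 else 0) := by
    intro i k
    have h1 : (D * D.adjugate) i k = d * (1 : Matrix (Fin n) (Fin n) ℤ) i k := by
      rw [Matrix.mul_adjugate]; simp [Matrix.smul_apply, hd]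
    have h2 : ∑ j, D i j * B j k = e * ∑ j, D i j * D.adjugate j k := by
      rw [Finset.mul_sum]
      refine Finset.sum_congr rfl fun j _ => ?_
      show D i j * (e • D.adjugate) j k = e * (D i j * D.adjugate j k)
      rw [Matrix.smul_apply, smul_eq_mul]
      ring
    have h3 : ∑ j, D i j * D.adjugate j k = d * (if i = k then 1 else 0) := by
      have := h1
      rwa [Matrix.mul_apply, Matrix.one_apply] at this
    rw [h2, h3]
    have : e * d = (d.natAbs : ℤ) := by
      rw [he]
      rcases le_or_gt 0 d with h | h
      · rw [if_pos h, one_mul, Int.natAbs_of_nonneg h]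
      · rw [if_neg (not_le.2 h), Int.ofNat_natAbs_of_nonpos (le_of_lt h)]
        ring
    rw [← mul_assoc, this]
  refine ⟨fun j => ∏ k, x k ^ B j k, ?_⟩
  funext i
  show ∏ j, (∏ k, x k ^ B j k) ^ A i j = x i ^ (d.natAbs)
  have step1 : ∀ j, (∏ k, x k ^ B j k) ^ A i j = ∏ k, x k ^ (B j k * (A i j : ℤ)) := by
    intro j
    rw [← zpow_natCast _ (A i j), prod_zpow']
    refine Finset.prod_congr rfl fun k _ => ?_
    rw [← zpow_mul]
  rw [Finset.prod_congr rfl fun j _ => step1 j, Finset.prod_comm]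
  have step2 : ∀ k, ∏ j, x k ^ (B j k * (A i j : ℤ)) = x k ^ (∑ j, D i j * B j k) := by
    intro k
    rw [prod_zpow_eq_zpow_sum]
    congr 1
    refine Finset.sum_congr rfl fun j _ => ?_
    rw [hD]
    show B j k * (A i j : ℤ) = (A i j : ℤ) * B j k
    ring
  rw [Finset.prod_congr rfl fun k _ => step2 k]
  have : ∀ k, x k ^ (∑ j, D i j * B j k) = x k ^ ((d.natAbs : ℤ) * (if i = k then 1 else 0)) := by
    intro k; rw [hDB i k]
  rw [Finset.prod_congr rfl fun k _ => this k]
  rw [Finset.prod_eq_single i (fun k _ hk => by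
    rw [if_neg fun h => hk h.symm, mul_zero, zpow_zero]) (by simp)]
  rw [if_pos rfl, mul_one, zpow_natCast]

lemma pUnit_zpow_norm (m : ℤ) : ‖((pUnit p ^ m : ℚ_[p]ˣ) : ℚ_[p])‖ = (p:ℝ) ^ (-m) := by
  have : ((pUnit p ^ m : ℚ_[p]ˣ) : ℚ_[p]) = (p : ℚ_[p]) ^ m := by
    rw [Units.val_zpow_eq_zpow_val]
    rfl
  rw [this, Padic.norm_p_zpow]

lemma unit_part_norm (x : ℚ_[p]ˣ) :
    ‖((x * pUnit p ^ (-(x : ℚ_[p]).valuation) : ℚ_[p]ˣ) : ℚ_[p])‖ = 1 := by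
  have hx0 : (x : ℚ_[p]) ≠ 0 := x.ne_zero
  have hppos : (0:ℝ) < p := by exact_mod_cast hp.out.pos
  rw [Units.val_mul, norm_mul, Padic.norm_eq_zpow_neg_valuation hx0, pUnit_zpow_norm, neg_neg,
    ← zpow_add₀ (ne_of_gt hppos)]
  simp

lemma index_pow_ne_zero (b : ℕ) (hb : 0 < b) :
    ((powMonoidHom b : ℚ_[p]ˣ →* ℚ_[p]ˣ).range).index ≠ 0 := by
  obtain ⟨a, ha, hH⟩ := padic_hensel_pow (p := p) b hb
  set Q := (powMonoidHom b : ℚ_[p]ˣ →* ℚ_[p]ˣ).range with hQ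
  set U : ℚ_[p]ˣ → ℤ_[p] := fun x =>
    ⟨((x * pUnit p ^ (-(x : ℚ_[p]).valuation) : ℚ_[p]ˣ) : ℚ_[p]), le_of_eq (unit_part_norm x)⟩
    with hU
  set g : ℚ_[p]ˣ → ZMod b × ZMod (p ^ (a + 1)) := fun x =>
    (((x : ℚ_[p]).valuation : ZMod b), PadicInt.toZModPow (a+1) (U x)) with hg
  have key : ∀ x y : ℚ_[p]ˣ, g x = g y → x * y⁻¹ ∈ Q := by
    intro x y hxy
    rw [hg, Prod.mk.injEq] at hxy
    obtain ⟨h1, h2⟩ := hxy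
    -- valuation congruence
    rw [ZMod.intCast_eq_intCast_iff] at h1
    obtain ⟨m, hm⟩ : ((b:ℤ)) ∣ ((y : ℚ_[p]).valuation - (x : ℚ_[p]).valuation) :=
      Int.ModEq.dvd h1
    -- hm : (y:ℚ_[p]).valuation - (x:ℚ_[p]).valuation = b * m
    -- unit parts are close
    have h3 : ‖U x - U y‖ ≤ (p:ℝ) ^ (-((a+1 : ℕ) : ℤ)) := by
      rw [PadicInt.norm_le_pow_iff_mem_span_pow, ← PadicInt.ker_toZModPow, RingHom.mem_ker,
        map_sub, h2, sub_self]
    set ux : ℚ_[p]ˣ := x * pUnit p ^ (-(x : ℚ_[p]).valuation) with hux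
    set uy : ℚ_[p]ˣ := y * pUnit p ^ (-(y : ℚ_[p]).valuation) with huy
    have hnuy : ‖(uy : ℚ_[p])‖ = 1 := unit_part_norm y
    have h4 : ‖((ux * uy⁻¹ : ℚ_[p]ˣ) : ℚ_[p]) - 1‖ < (p:ℝ) ^ (-(a:ℤ)) := by
      have heq : ((ux * uy⁻¹ : ℚ_[p]ˣ) : ℚ_[p]) - 1 =
          ((ux : ℚ_[p]) - (uy : ℚ_[p])) * ((uy⁻¹ : ℚ_[p]ˣ) : ℚ_[p]) := by
        rw [Units.val_mul, sub_mul, Units.mul_inv]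
      have hnuyi : ‖((uy⁻¹ : ℚ_[p]ˣ) : ℚ_[p])‖ = 1 := by
        have : (uy : ℚ_[p]) * ((uy⁻¹ : ℚ_[p]ˣ) : ℚ_[p]) = 1 := by
          rw [← Units.val_mul, mul_inv_cancel]
          rfl
        have := congrArg (‖·‖) this
        simp only [norm_mul, hnuy, one_mul, norm_one] at this
        exact this
      rw [heq, norm_mul, hnuyi, mul_one]
      have hUxy : ‖(ux : ℚ_[p]) - (uy : ℚ_[p])‖ = ‖U x - U y‖ := rfl
      rw [hUxy]
      refine lt_of_le_of_lt h3 ?_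
      have hp1 : (1:ℝ) < p := Nat.one_lt_cast.2 hp.out.one_lt
      exact zpow_lt_zpow_right₀ hp1 (by omega)
    obtain ⟨z, hz⟩ := hH (ux * uy⁻¹) h4
    refine ⟨pUnit p ^ (-m) * z, ?_⟩
    show (pUnit p ^ (-m) * z) ^ b = x * y⁻¹
    have hP : ((p : ℚ_[p])) ≠ 0 := by exact_mod_cast hp.out.ne_zero
    have hxy : x * y⁻¹ = pUnit p ^ ((x:ℚ_[p]).valuation - (y:ℚ_[p]).valuation) * (ux * uy⁻¹) := by
      apply Units.ext
      rw [hux, huy]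
      push_cast [Units.val_mul, Units.val_zpow_eq_zpow_val]
      have hPu : ((pUnit p : ℚ_[p])) = (p : ℚ_[p]) := rfl
      rw [hPu, zpow_sub₀ hP, zpow_neg, zpow_neg]
      have hy0 : ((y : ℚ_[p])) ≠ 0 := y.ne_zero
      have hpz : ((p:ℚ_[p])) ^ ((x:ℚ_[p]).valuation) ≠ 0 := zpow_ne_zero _ hP
      have hpz' : ((p:ℚ_[p])) ^ ((y:ℚ_[p]).valuation) ≠ 0 := zpow_ne_zero _ hP
      field_simp
    have hvm : (x:ℚ_[p]).valuation - (y:ℚ_[p]).valuation = (-m) * b := by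
      have : (x:ℚ_[p]).valuation - (y:ℚ_[p]).valuation = -((y:ℚ_[p]).valuation - (x:ℚ_[p]).valuation) := by ring
      rw [this, hm]; ring
    rw [mul_pow, hz, hxy, hvm, ← zpow_natCast (pUnit p ^ (-m)) b, ← zpow_mul]
  haveI : NeZero b := ⟨hb.ne'⟩
  haveI : Finite (ℚ_[p]ˣ ⧸ Q) := by
    refine Finite.of_injective (fun q => g q.out) ?_
    intro q1 q2 h
    have hmem := key _ _ h
    have h2 : q1.out⁻¹ * q2.out ∈ Q := by
      have h' := Q.inv_mem hmem
      rwa [mul_inv_rev, inv_inv, mul_comm] at h'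
    have h3 : (QuotientGroup.mk q1.out : ℚ_[p]ˣ ⧸ Q) = QuotientGroup.mk q2.out :=
      (QuotientGroup.eq).2 h2
    rwa [QuotientGroup.out_eq', QuotientGroup.out_eq'] at h3
  exact Subgroup.index_ne_zero_of_finite

/-- **Lemma 5.1 (p-adic case).**  Let `p` be prime, `(a_{ij})` an `n×n` matrix of nonnegative
integers with nonzero determinant, and `m : (ℚ_p^×)^n → (ℚ_p^×)^n` the homomorphism
`m(x)_i = ∏_j x_j^{a_{ij}}`.  Then the image of `m` is a finite-index subgroup of `(ℚ_p^×)^n`,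
and there are positive integers `a`, `b` such that for all integers `k_1,…,k_n` and all
`x_i ∈ ℚ_p` with `|x_i − 1|_p < p^{-a}`, the point `(p^{bk_1}x_1,…,p^{bk_n}x_n)` lies in the
image of `m`. -/
theorem monomialMapPadic_range (p : ℕ) [hp : Fact p.Prime] (n : ℕ)
    (A : Matrix (Fin n) (Fin n) ℕ)
    (hA : (Matrix.of fun i j => (A i j : ℚ)).det ≠ 0) :
    (∃ H : Subgroup (Fin n → ℚ_[p]ˣ),
      (H : Set (Fin n → ℚ_[p]ˣ)) = Set.range (monomialMapPadic A) ∧ H.index ≠ 0) ∧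
    ∃ a b : ℕ, 0 < a ∧ 0 < b ∧
      ∀ (k : Fin n → ℤ) (x : Fin n → ℚ_[p]ˣ),
        (∀ i, ‖((x i : ℚ_[p]) - 1)‖ < (p : ℝ) ^ (-(a : ℤ))) →
        (fun i => pUnit p ^ ((b : ℤ) * k i) * x i) ∈ Set.range (monomialMapPadic A) := by
  classical
  set D : Matrix (Fin n) (Fin n) ℤ := Matrix.of fun i j => (A i j : ℤ) with hD
  have hdQ : ((D.det : ℚ)) = (Matrix.of fun i j => (A i j : ℚ)).det := by
    have h := RingHom.map_det (Int.castRingHom ℚ) D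
    rw [show ((D.det : ℚ)) = (Int.castRingHom ℚ) D.det from rfl, h]
    congr 1
  have hd : D.det ≠ 0 := by
    intro h
    apply hA
    rw [← hdQ, h, Int.cast_zero]
  set b := D.det.natAbs with hb
  have hb0 : 0 < b := Int.natAbs_pos.2 hd
  obtain ⟨a, ha0, hH⟩ := padic_hensel_pow (p := p) b hb0
  have hpow : ∀ x : Fin n → ℚ_[p]ˣ, (fun i => x i ^ b) ∈ Set.range (monomialMapPadic A) :=
    fun x => zpow_natAbs_det_mem_range A x
  constructor
  · refine ⟨(monomialHom A).range, ?_, ?_⟩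
    · ext g
      simp only [MonoidHom.coe_range, Set.mem_range, SetLike.mem_coe, MonoidHom.mem_range]
      rfl
    · set Q := (powMonoidHom b : ℚ_[p]ˣ →* ℚ_[p]ˣ).range with hQ
      have hK : Subgroup.pi Set.univ (fun _ : Fin n => Q) ≤ (monomialHom A).range := by
        intro g hg
        rw [Subgroup.mem_pi] at hg
        choose h hh using fun i => hg i (Set.mem_univ i)
        obtain ⟨w, hw⟩ := hpow h
        refine ⟨w, ?_⟩
        show monomialMapPadic A w = g
        rw [hw]
        funext i
        exact hh i
      intro h0
      have hdvd := Subgroup.index_dvd_of_le hK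
      rw [h0] at hdvd
      have h1 : (Subgroup.pi Set.univ (fun _ : Fin n => Q)).index = 0 :=
        zero_dvd_iff.1 hdvd
      rw [Subgroup.index_pi] at h1
      obtain ⟨i, -, hi⟩ := Finset.prod_eq_zero_iff.1 h1
      exact index_pow_ne_zero b hb0 hi
  · refine ⟨a, b, ha0, hb0, fun k x hx => ?_⟩
    choose z hz using fun i => hH (x i) (hx i)
    obtain ⟨w, hw⟩ := hpow (fun i => pUnit p ^ (k i) * z i)
    refine ⟨w, ?_⟩
    show monomialMapPadic A w = _
    rw [hw]
    funext i
    show (pUnit p ^ (k i) * z i) ^ b = pUnit p ^ ((b : ℤ) * k i) * x i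
    rw [mul_pow, hz i, ← zpow_natCast (pUnit p ^ (k i)) b, ← zpow_mul, mul_comm (k i) ((b:ℕ):ℤ)]
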